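/- Necessary condition from the shrinking-ball example: let d ≥ 2, 1 ≤ r ≤ ∞ and suppose ‖𝔄^r f‖_{L^q(ℝ^d)} ≤ C ‖f‖_{L^p(ℝ^d)} holds for all f. Testing with f = χ_{B(0, cδ)} for small δ > 0, for which 𝔄^r f(x) ≳ δ^{d-1+1/r} on the annulus {1 ≤ |x| ≤ 2}, yields the necessary condition d/p ≤ d - 1 + 1/r. -/

import Mathlib

open MeasureTheory Set
open scoped ENNReal

noncomputable section

/-- Surface measure on the unit sphere `𝕊^{d-1} ⊂ ℝ^d`. -/
def sphMeas (d : ℕ) : Measure (EuclideanSpace ℝ (Fin d)) :=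
  (μH[(d : ℝ) - 1]).restrict (Metric.sphere 0 1)

/-- Spherical average `A_t f(x)`. -/
def Asph (d : ℕ) (t : ℝ) (f : EuclideanSpace ℝ (Fin d) → ℝ)
    (x : EuclideanSpace ℝ (Fin d)) : ℝ :=
  ∫ y, f (x - t • y) ∂sphMeas d

/-- The measure `t^{d-1} dt` on `[1,2]`. -/
def muT (d : ℕ) : Measure ℝ :=
  (volume.restrict (Set.Icc (1 : ℝ) 2)).withDensity fun t => ENNReal.ofReal (t ^ ((d : ℝ) - 1))

/-- `𝔄^r f(x) = ‖A_t f(x)‖_{L^r([1,2], t^{d-1}dt)}`. -/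
def frakAe (d : ℕ) (r : ℝ≥0∞) (f : EuclideanSpace ℝ (Fin d) → ℝ)
    (x : EuclideanSpace ℝ (Fin d)) : ℝ≥0∞ :=
  eLpNorm (fun t => Asph d t f x) r (muT d)

namespace Stmt14Aux
open Metric
open scoped NNReal


abbrev E (n : ℕ) := EuclideanSpace ℝ (Fin n)

def cap (n : ℕ) (u : E n) (δ : ℝ) : Set (E n) :=
  Metric.sphere 0 1 ∩ {y | ‖y - u‖ ≤ δ}

def e1 (n : ℕ) : E (n+1) := EuclideanSpace.single 0 1

def Pr (n : ℕ) (y : E (n+1)) : E n := WithLp.toLp 2 (fun j : Fin n => y j.succ)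

def Gr (n : ℕ) (w : E n) : E (n+1) :=
  WithLp.toLp 2 (fun i : Fin (n+1) => Fin.cases (motive := fun _ => ℝ) (Real.sqrt (1 - ‖w‖^2)) (fun j => w j) i)

variable {n : ℕ}

lemma norm_sq_eq (y : E n) : ‖y‖^2 = ∑ i, (y i)^2 := by
  rw [EuclideanSpace.norm_eq, Real.sq_sqrt (by positivity)]
  simp [Real.norm_eq_abs, sq_abs]

lemma norm_sq_split (y : E (n+1)) : ‖y‖^2 = (y 0)^2 + ‖Pr n y‖^2 := by
  rw [norm_sq_eq, norm_sq_eq, Fin.sum_univ_succ]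
  rfl

lemma Pr_sub (y z : E (n+1)) : Pr n (y - z) = Pr n y - Pr n z := rfl

lemma Pr_lip : LipschitzWith 1 (Pr n) := by
  apply LipschitzWith.of_dist_le_mul
  intro x y
  rw [NNReal.coe_one, one_mul, dist_eq_norm, dist_eq_norm, ← Pr_sub]
  have h := norm_sq_split (x - y)
  nlinarith [norm_nonneg (x - y), norm_nonneg (Pr n (x - y)), sq_nonneg ((x-y) 0)]

lemma Gr_zero (w : E n) : Gr n w 0 = Real.sqrt (1 - ‖w‖^2) := rfl

lemma Gr_succ (w : E n) (j : Fin n) : Gr n w j.succ = w j := rfl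

lemma Pr_Gr (w : E n) : Pr n (Gr n w) = w := rfl

lemma e1_zero : e1 n 0 = 1 := by simp [e1, EuclideanSpace.single_apply]

lemma e1_succ (j : Fin n) : e1 n j.succ = 0 := by
  simp [e1, EuclideanSpace.single_apply, Fin.succ_ne_zero]

lemma Pr_e1 : Pr n (e1 n) = 0 := by
  ext j; exact e1_succ j

lemma norm_Gr (w : E n) (hw : ‖w‖ ≤ 1) : ‖Gr n w‖ = 1 := by
  have h0 : (0:ℝ) ≤ 1 - ‖w‖^2 := by nlinarith [norm_nonneg w]
  have h : ‖Gr n w‖^2 = 1 := by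
    rw [norm_sq_split, Pr_Gr, Gr_zero, Real.sq_sqrt h0]; ring
  nlinarith [norm_nonneg (Gr n w)]

lemma dist_e1_sq (y : E (n+1)) : ‖y - e1 n‖^2 = (y 0 - 1)^2 + ‖Pr n y‖^2 := by
  have h : (y - e1 n) 0 = y 0 - 1 := by
    show y 0 - e1 n 0 = y 0 - 1
    rw [e1_zero]
  rw [norm_sq_split, Pr_sub, Pr_e1, sub_zero, h]


lemma sqrt_lip {w₁ w₂ : E n} (h₁ : ‖w₁‖ ≤ 1/2) (h₂ : ‖w₂‖ ≤ 1/2) :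
    |Real.sqrt (1 - ‖w₁‖^2) - Real.sqrt (1 - ‖w₂‖^2)| ≤ ‖w₁ - w₂‖ := by
  set g₁ := Real.sqrt (1 - ‖w₁‖^2) with hg₁
  set g₂ := Real.sqrt (1 - ‖w₂‖^2) with hg₂
  have hn₁ : (0:ℝ) ≤ ‖w₁‖ := norm_nonneg _
  have hn₂ : (0:ℝ) ≤ ‖w₂‖ := norm_nonneg _
  have hq₁ : g₁^2 = 1 - ‖w₁‖^2 := Real.sq_sqrt (by nlinarith)
  have hq₂ : g₂^2 = 1 - ‖w₂‖^2 := Real.sq_sqrt (by nlinarith)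
  have hb₁ : (1:ℝ)/2 ≤ g₁ := by
    rw [hg₁]
    rw [show (1:ℝ)/2 = Real.sqrt (1/4) by
      rw [show (1:ℝ)/4 = (1/2)^2 by norm_num, Real.sqrt_sq (by norm_num)]]
    exact Real.sqrt_le_sqrt (by nlinarith)
  have hb₂ : (1:ℝ)/2 ≤ g₂ := by
    rw [hg₂]
    rw [show (1:ℝ)/2 = Real.sqrt (1/4) by
      rw [show (1:ℝ)/4 = (1/2)^2 by norm_num, Real.sqrt_sq (by norm_num)]]
    exact Real.sqrt_le_sqrt (by nlinarith)
  have hd : |‖w₁‖ - ‖w₂‖| ≤ ‖w₁ - w₂‖ := abs_norm_sub_norm_le _ _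
  have key : |g₁ - g₂| * (g₁ + g₂) ≤ ‖w₁ - w₂‖ := by
    have : |g₁ - g₂| * (g₁ + g₂) = |g₁^2 - g₂^2| := by
      rw [← abs_of_nonneg (by linarith : (0:ℝ) ≤ g₁ + g₂), ← abs_mul]
      ring_nf
    rw [this, hq₁, hq₂, show 1 - ‖w₁‖^2 - (1 - ‖w₂‖^2) = (‖w₂‖-‖w₁‖)*(‖w₂‖+‖w₁‖) by ring,
      abs_mul]
    have h3 : |‖w₂‖-‖w₁‖| ≤ ‖w₁-w₂‖ := by rw [abs_sub_comm]; exact hd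
    have h4 : |‖w₂‖+‖w₁‖| ≤ 1 := by rw [abs_of_nonneg (by linarith)]; linarith
    nlinarith [abs_nonneg (‖w₂‖-‖w₁‖), abs_nonneg (‖w₂‖+‖w₁‖)]
  nlinarith [abs_nonneg (g₁ - g₂)]

lemma Gr_lipschitzOn : LipschitzOnWith 2 (Gr n) (closedBall (0 : E n) (1/2)) := by
  rw [lipschitzOnWith_iff_dist_le_mul]
  intro x hx y hy
  rw [mem_closedBall, dist_zero_right] at hx hy
  rw [dist_eq_norm, dist_eq_norm]
  have hsplit := norm_sq_split (Gr n x - Gr n y)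
  have h0 : (Gr n x - Gr n y) 0 = Real.sqrt (1 - ‖x‖^2) - Real.sqrt (1 - ‖y‖^2) := rfl
  have hPr : Pr n (Gr n x - Gr n y) = x - y := by
    rw [Pr_sub, Pr_Gr, Pr_Gr]
  rw [h0, hPr] at hsplit
  have h1 := sqrt_lip hx hy
  set a : ℝ := Real.sqrt (1 - ‖x‖^2) - Real.sqrt (1 - ‖y‖^2) with ha
  have ha2 : a^2 ≤ ‖x - y‖^2 := by
    have := sq_abs a
    nlinarith [abs_nonneg a, norm_nonneg (x - y)]
  have h2 : ‖Gr n x - Gr n y‖^2 ≤ (2 * ‖x - y‖)^2 := by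
    rw [hsplit]
    nlinarith [norm_nonneg (x - y)]
  have hc : ((2:ℝ≥0):ℝ) = 2 := rfl
  rw [hc]
  nlinarith [norm_nonneg (Gr n x - Gr n y), norm_nonneg (x - y)]

/-- cap is inside the graph image -/
lemma cap_subset_image {δ : ℝ} (hδ : δ ≤ 1/2) :
    cap (n+1) (e1 n) δ ⊆ Gr n '' (closedBall (0 : E n) (1/2)) := by
  rintro y ⟨hy1, hy2⟩
  rw [mem_sphere_zero_iff_norm] at hy1
  simp only [mem_setOf_eq] at hy2
  have hye : ‖y - e1 n‖ ≤ 1/2 := le_trans hy2 hδ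
  have hPr : ‖Pr n y‖ ≤ 1/2 := by
    have : ‖Pr n y - Pr n (e1 n)‖ ≤ 1 * ‖y - e1 n‖ := by
      simpa [dist_eq_norm] using Pr_lip.dist_le_mul y (e1 n)
    rw [Pr_e1, sub_zero, one_mul] at this
    linarith
  have hy0 : 1/2 ≤ y 0 := by
    have h := dist_e1_sq y
    have h2 : (y 0 - 1)^2 ≤ (1/2)^2 := by nlinarith [norm_nonneg (Pr n y), norm_nonneg (y - e1 n)]
    nlinarith
  refine ⟨Pr n y, by simpa [dist_zero_right] using hPr, ?_⟩
  ext i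
  refine Fin.cases ?_ (fun j => rfl) i
  show Real.sqrt (1 - ‖Pr n y‖^2) = y 0
  have : ‖Pr n y‖^2 = 1 - (y 0)^2 := by
    have := norm_sq_split y
    rw [hy1] at this
    nlinarith
  rw [this]
  rw [show 1 - (1 - (y 0)^2) = (y 0)^2 by ring]
  exact Real.sqrt_sq (by linarith)


/-! ### Hausdorff measure comparisons -/

lemma pi_hausdorff (n : ℕ) : (μH[(n:ℝ)] : Measure (Fin n → ℝ)) = volume := by
  have := MeasureTheory.hausdorffMeasure_pi_real (ι := Fin n)
  rwa [Fintype.card_fin] at this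

def Leq (n : ℕ) : (Fin n → ℝ) → E n := (WithLp.equiv 2 (Fin n → ℝ)).symm

def Req (n : ℕ) : E n → (Fin n → ℝ) := WithLp.equiv 2 (Fin n → ℝ)

lemma lip_Req : LipschitzWith 1 (Req n) := PiLp.lipschitzWith_ofLp 2 _

lemma lip_Leq : LipschitzWith ((n : ℝ≥0) ^ ((1:ℝ)/2)) (Leq n) := by
  intro a b
  have h := PiLp.antilipschitzWith_ofLp 2 (fun _ : Fin n => ℝ) (Leq n a) (Leq n b)
  have he : ∀ v, WithLp.ofLp (Leq n v) = v := fun v =>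
    (WithLp.equiv 2 (Fin n → ℝ)).apply_symm_apply v
  rw [he, he] at h
  have hc : ((Fintype.card (Fin n) : ℝ≥0) ^ (1 / (2:ℝ≥0∞)).toReal) = ((n:ℝ≥0) ^ ((1:ℝ)/2)) := by
    rw [Fintype.card_fin]
    norm_num
  rwa [hc] at h

lemma Req_zero : Req n 0 = 0 := rfl
lemma Leq_zero : Leq n 0 = 0 := rfl

lemma hausdorff_E_ball_le (n : ℕ) {ρ : ℝ} (hρ : 0 ≤ ρ) :
    μH[(n:ℝ)] (closedBall (0 : E n) ρ) ≤
      (((n : ℝ≥0) ^ ((1:ℝ)/2) : ℝ≥0) : ℝ≥0∞) ^ (n:ℝ) * ENNReal.ofReal ((2*ρ)^n) := by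
  have hsub : closedBall (0 : E n) ρ ⊆ Leq n '' (closedBall (0 : Fin n → ℝ) ρ) := by
    intro x hx
    refine ⟨Req n x, ?_, (WithLp.equiv 2 (Fin n → ℝ)).symm_apply_apply x⟩
    have := lip_Req.dist_le_mul x 0
    rw [Req_zero] at this
    simp only [mem_closedBall] at hx ⊢
    calc dist (Req n x) 0 ≤ 1 * dist x 0 := this
      _ ≤ ρ := by rw [one_mul]; exact hx
  calc μH[(n:ℝ)] (closedBall (0 : E n) ρ)
      ≤ μH[(n:ℝ)] (Leq n '' (closedBall (0 : Fin n → ℝ) ρ)) := measure_mono hsub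
    _ ≤ (((n : ℝ≥0) ^ ((1:ℝ)/2) : ℝ≥0) : ℝ≥0∞) ^ (n:ℝ) * μH[(n:ℝ)] (closedBall (0 : Fin n → ℝ) ρ) :=
        lip_Leq.hausdorffMeasure_image_le (by positivity) _
    _ = _ := by
        rw [pi_hausdorff, Real.volume_pi_closedBall _ hρ, Fintype.card_fin]

lemma hausdorff_E_ball_ge (n : ℕ) {s : ℝ} (hs : 0 ≤ s) :
    ENNReal.ofReal ((2*s)^n) ≤ μH[(n:ℝ)] (closedBall (0 : E n) ((Real.sqrt n) * s)) := by
  have hsub : closedBall (0 : Fin n → ℝ) s ⊆ Req n '' (closedBall (0 : E n) ((Real.sqrt n) * s)) := by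
    intro v hv
    refine ⟨Leq n v, ?_, (WithLp.equiv 2 (Fin n → ℝ)).apply_symm_apply v⟩
    have := lip_Leq.dist_le_mul v 0
    rw [Leq_zero] at this
    simp only [mem_closedBall] at hv ⊢
    have hcoe : (((n : ℝ≥0) ^ ((1:ℝ)/2) : ℝ≥0) : ℝ) = Real.sqrt n := by
      rw [NNReal.coe_rpow, NNReal.coe_natCast, Real.sqrt_eq_rpow]
    calc dist (Leq n v) 0 ≤ (((n : ℝ≥0) ^ ((1:ℝ)/2) : ℝ≥0) : ℝ) * dist v 0 := this
      _ ≤ Real.sqrt n * s := by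
          rw [hcoe]
          exact mul_le_mul_of_nonneg_left hv (Real.sqrt_nonneg _)
  calc ENNReal.ofReal ((2*s)^n)
      = μH[(n:ℝ)] (closedBall (0 : Fin n → ℝ) s) := by
        rw [pi_hausdorff, Real.volume_pi_closedBall _ hs, Fintype.card_fin]
    _ ≤ μH[(n:ℝ)] (Req n '' (closedBall (0 : E n) ((Real.sqrt n) * s))) := measure_mono hsub
    _ ≤ ((1:ℝ≥0):ℝ≥0∞) ^ (n:ℝ) * μH[(n:ℝ)] (closedBall (0 : E n) ((Real.sqrt n) * s)) :=
        lip_Req.hausdorffMeasure_image_le (by positivity) _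
    _ = _ := by simp


lemma cap_lt_top (n : ℕ) {δ : ℝ} (hδ : δ ≤ 1/2) :
    μH[(n:ℝ)] (cap (n+1) (e1 n) δ) < ∞ := by
  have h1 : cap (n+1) (e1 n) δ ⊆ Gr n '' (closedBall (0 : E n) (1/2)) := by
    intro y hy
    exact cap_subset_image (le_refl (1/2 : ℝ)) ⟨hy.1, le_trans hy.2 hδ⟩
  have h2 : μH[(n:ℝ)] (cap (n+1) (e1 n) δ)
      ≤ ((2:ℝ≥0):ℝ≥0∞) ^ (n:ℝ) * μH[(n:ℝ)] (closedBall (0 : E n) (1/2)) :=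
    le_trans (measure_mono h1) (Gr_lipschitzOn.hausdorffMeasure_image_le (by positivity))
  have h3 := hausdorff_E_ball_le n (by norm_num : (0:ℝ) ≤ 1/2)
  have h4 : μH[(n:ℝ)] (closedBall (0 : E n) (1/2)) < ∞ :=
    lt_of_le_of_lt h3 (by
      apply ENNReal.mul_lt_top
      · exact ENNReal.rpow_lt_top_of_nonneg (by positivity) ENNReal.coe_ne_top
      · exact ENNReal.ofReal_lt_top)
  exact lt_of_le_of_lt h2 (ENNReal.mul_lt_top
    (ENNReal.rpow_lt_top_of_nonneg (by positivity) ENNReal.coe_ne_top) h4)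

lemma cap_lower (n : ℕ) (hn : 1 ≤ n) {δ : ℝ} (h0 : 0 < δ) (hδ : δ ≤ 1/2) :
    ENNReal.ofReal ((δ / Real.sqrt n)^n) ≤ μH[(n:ℝ)] (cap (n+1) (e1 n) δ) := by
  have hsq : (0:ℝ) < Real.sqrt n := Real.sqrt_pos.2 (by exact_mod_cast hn)
  set s : ℝ := δ / (2 * Real.sqrt n) with hs
  have hs0 : 0 ≤ s := by positivity
  have hball := hausdorff_E_ball_ge n hs0
  have he1 : Real.sqrt n * s = δ / 2 := by
    rw [hs]; field_simp
  have he2 : (2*s) = δ / Real.sqrt n := by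
    rw [hs]; field_simp
  rw [he1, he2] at hball
  have hsub : closedBall (0 : E n) (δ/2) ⊆ Pr n '' (cap (n+1) (e1 n) δ) := by
    intro w hw
    rw [mem_closedBall, dist_zero_right] at hw
    have hw1 : ‖w‖ ≤ 1 := by linarith [norm_nonneg w]
    set g : ℝ := Real.sqrt (1 - ‖w‖^2) with hg
    have hg0 : 0 ≤ g := Real.sqrt_nonneg _
    have hg1 : g ≤ 1 := by
      rw [hg]
      exact Real.sqrt_le_one.2 (by nlinarith [norm_nonneg w])
    have hgsq : g^2 = 1 - ‖w‖^2 := Real.sq_sqrt (by nlinarith [norm_nonneg w])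
    refine ⟨Gr n w, ⟨?_, ?_⟩, Pr_Gr w⟩
    · rw [mem_sphere_zero_iff_norm]; exact norm_Gr w hw1
    · show ‖Gr n w - e1 n‖ ≤ δ
      have hd := dist_e1_sq (Gr n w)
      rw [Pr_Gr] at hd
      have hzero : Gr n w 0 = g := rfl
      rw [hzero] at hd
      have hsq2 : ‖Gr n w - e1 n‖^2 ≤ δ^2 := by
        rw [hd]
        nlinarith [norm_nonneg w, sq_nonneg (1 - g)]
      nlinarith [norm_nonneg (Gr n w - e1 n)]
  calc ENNReal.ofReal ((δ / Real.sqrt n)^n)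
      ≤ μH[(n:ℝ)] (closedBall (0 : E n) (δ/2)) := hball
    _ ≤ μH[(n:ℝ)] (Pr n '' (cap (n+1) (e1 n) δ)) := measure_mono hsub
    _ ≤ ((1:ℝ≥0):ℝ≥0∞) ^ (n:ℝ) * μH[(n:ℝ)] (cap (n+1) (e1 n) δ) :=
        Pr_lip.hausdorffMeasure_image_le (by positivity) _
    _ = μH[(n:ℝ)] (cap (n+1) (e1 n) δ) := by simp

lemma exists_rot (n : ℕ) {v : E (n+1)} (hv : ‖v‖ = 1) :
    ∃ b : OrthonormalBasis (Fin (n+1)) ℝ (E (n+1)), b 0 = v := by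
  have hcard : Module.finrank ℝ (E (n+1)) = Fintype.card (Fin (n+1)) := by
    simp [finrank_euclideanSpace_fin]
  have horth : Orthonormal ℝ (({0} : Set (Fin (n+1))).restrict (fun _ => v)) := by
    constructor
    · intro i
      exact hv
    · intro i j hij
      exact absurd (Subtype.ext ((Set.mem_singleton_iff.1 i.2).trans
        (Set.mem_singleton_iff.1 j.2).symm)) hij
  obtain ⟨b, hb⟩ := horth.exists_orthonormalBasis_extension_of_card_eq hcard
  exact ⟨b, hb 0 rfl⟩

lemma norm_e1 : ‖e1 n‖ = 1 := by
  rw [e1, EuclideanSpace.norm_single, norm_one]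

lemma rot_cap (n : ℕ) {u : E (n+1)} (hu : ‖u‖ = 1) (δ : ℝ) :
    μH[(n:ℝ)] (cap (n+1) u δ) = μH[(n:ℝ)] (cap (n+1) (e1 n) δ) := by
  obtain ⟨b, hb0⟩ := exists_rot n hu
  obtain ⟨c, hc0⟩ := exists_rot n (norm_e1 (n := n))
  set R : E (n+1) ≃ₗᵢ[ℝ] E (n+1) := c.repr.trans b.repr.symm with hR
  have hRe : R (e1 n) = u := by
    show b.repr.symm (c.repr (e1 n)) = u
    rw [← hc0, c.repr_self, ← b.repr_self, b.repr.symm_apply_apply, hb0]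
  have himg : R '' (cap (n+1) (e1 n) δ) = cap (n+1) u δ := by
    ext z
    constructor
    · rintro ⟨y, ⟨hy1, hy2⟩, rfl⟩
      rw [mem_sphere_zero_iff_norm] at hy1
      refine ⟨by rw [mem_sphere_zero_iff_norm, R.norm_map]; exact hy1, ?_⟩
      show ‖R y - u‖ ≤ δ
      rw [← hRe, ← R.map_sub, R.norm_map]
      exact hy2
    · intro hz
      refine ⟨R.symm z, ⟨?_, ?_⟩, R.apply_symm_apply z⟩
      · rw [mem_sphere_zero_iff_norm, R.symm.norm_map]
        exact mem_sphere_zero_iff_norm.1 hz.1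
      · show ‖R.symm z - e1 n‖ ≤ δ
        have : R.symm u = e1 n := by rw [← hRe, R.symm_apply_apply]
        rw [← this, ← R.symm.map_sub, R.symm.norm_map]
        exact hz.2
  rw [← himg, R.isometry.hausdorffMeasure_image (Or.inl (by positivity))]


lemma exp_compare {α β K M : ℝ} (hK : 0 < K) (hM : 0 < M)
    (hineq : ∀ δ : ℝ, 0 < δ → δ ≤ 1/60 → K * δ ^ α ≤ M * δ ^ β) : β ≤ α := by
  by_contra hlt
  push_neg at hlt
  set ε := β - α with hε
  have hε0 : 0 < ε := by simp [hε]; linarith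
  set δ := min (1/60 : ℝ) ((K/(2*M)) ^ (1/ε)) with hδ
  have hKM : 0 < K/(2*M) := by positivity
  have hδ0 : 0 < δ := lt_min (by norm_num) (Real.rpow_pos_of_pos hKM _)
  have h1 := hineq δ hδ0 (min_le_left _ _)
  have hsplit : δ ^ β = δ ^ α * δ ^ ε := by
    rw [← Real.rpow_add hδ0]
    congr 1
    simp [hε]
  rw [hsplit] at h1
  have hδα : 0 < δ ^ α := Real.rpow_pos_of_pos hδ0 _
  have h2 : K ≤ M * δ ^ ε := by
    have h := mul_le_mul_of_nonneg_right h1 (le_of_lt (inv_pos.2 hδα))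
    rw [mul_assoc, mul_inv_cancel₀ hδα.ne', mul_one] at h
    calc K ≤ M * (δ ^ α * δ ^ ε) * (δ ^ α)⁻¹ := h
      _ = M * δ ^ ε := by field_simp
  have h3 : δ ^ ε ≤ K/(2*M) := by
    calc δ ^ ε ≤ ((K/(2*M)) ^ (1/ε)) ^ ε :=
          Real.rpow_le_rpow hδ0.le (min_le_right _ _) hε0.le
      _ = K/(2*M) := by
          rw [← Real.rpow_mul hKM.le, one_div_mul_cancel hε0.ne', Real.rpow_one]
  have h4 : K ≤ K/2 := by
    calc K ≤ M * δ ^ ε := h2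
      _ ≤ M * (K/(2*M)) := mul_le_mul_of_nonneg_left h3 hM.le
      _ = K/2 := by field_simp
  linarith

end Stmt14Aux

set_option maxHeartbeats 1000000 in
/-- necessary condition from the shrinking-ball example: if
`‖𝔄^r f‖_{L^q} ≤ C ‖f‖_{L^p}` for all `f`, then `d/p ≤ d - 1 + 1/r`. -/
theorem stmt14 (d : ℕ) (hd : 2 ≤ d) (r : ℝ≥0∞) (hr : 1 ≤ r) (p q : ℝ)
    (hp : 1 ≤ p) (hq : 1 ≤ q) (C : ℝ) (hC : 0 < C)
    (h : ∀ f : EuclideanSpace ℝ (Fin d) → ℝ, Measurable f →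
      (∫⁻ x, frakAe d r f x ^ q) ^ (1 / q) ≤
        ENNReal.ofReal C * eLpNorm f (ENNReal.ofReal p) volume) :
    (d : ℝ) / p ≤ (d : ℝ) - 1 + (r⁻¹).toReal := by

  classical
  obtain ⟨n, rfl⟩ : ∃ n, d = n + 1 := ⟨d - 1, by omega⟩
  have hn : 1 ≤ n := by omega
  have hp0 : (0:ℝ) < p := by linarith
  have hq0 : (0:ℝ) < q := by linarith
  set ρ : ℝ := (r⁻¹).toReal with hρdef
  have hρ0 : (0:ℝ) ≤ ρ := ENNReal.toReal_nonneg
  have hexp : ((n+1:ℕ):ℝ) - 1 = (n:ℝ) := by push_cast; ring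
  have hr0 : r ≠ 0 := (lt_of_lt_of_le zero_lt_one hr).ne'
  -- the annulus
  set Ann : Set (Stmt14Aux.E (n+1)) := Metric.closedBall 0 (3/2) \ Metric.ball 0 1 with hAnn
  have hAnnMeas : MeasurableSet Ann := measurableSet_closedBall.diff measurableSet_ball
  set V : ℝ≥0∞ := volume Ann with hVdef
  have hVt : V ≠ ∞ :=
    (lt_of_le_of_lt (measure_mono diff_subset) measure_closedBall_lt_top).ne
  have hV0 : V ≠ 0 := by
    have hball : Metric.ball ((5/4 : ℝ) • Stmt14Aux.e1 n) (1/8) ⊆ Ann := by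
      intro z hz
      rw [Metric.mem_ball, dist_eq_norm] at hz
      have hc : ‖(5/4 : ℝ) • Stmt14Aux.e1 n‖ = 5/4 := by
        rw [norm_smul, Stmt14Aux.norm_e1, Real.norm_eq_abs, mul_one]
        norm_num
      have habs := abs_norm_sub_norm_le z ((5/4 : ℝ) • Stmt14Aux.e1 n)
      rw [hc] at habs
      obtain ⟨hl, hu⟩ := abs_le.1 habs
      refine ⟨?_, ?_⟩
      · rw [Metric.mem_closedBall, dist_zero_right]
        linarith
      · intro hmem
        rw [Metric.mem_ball, dist_zero_right] at hmem
        linarith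
    exact ((Metric.measure_ball_pos volume _ (by norm_num)).trans_le (measure_mono hball)).ne'
  set B₀ : ℝ≥0∞ := volume (Metric.ball (0 : Stmt14Aux.E (n+1)) 1) with hB₀def
  have hB0 : B₀ ≠ 0 := (Metric.measure_ball_pos volume 0 one_pos).ne'
  have hBt : B₀ ≠ ∞ := measure_ball_lt_top.ne
  set v : ℝ := V.toReal with hvdef
  set b : ℝ := B₀.toReal with hbdef
  have hv0 : 0 < v := ENNReal.toReal_pos hV0 hVt
  have hb0 : 0 < b := ENNReal.toReal_pos hB0 hBt
  set sn : ℝ := Real.sqrt n with hsndef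
  have hsn0 : 0 < sn := Real.sqrt_pos.2 (by exact_mod_cast hn)
  set β : ℝ := ((n:ℝ)+1)/p with hβdef
  set K0 : ℝ := v^((1:ℝ)/q) * ((sn^n)⁻¹) with hK0def
  have hK0pos : 0 < K0 := by positivity
  set M0 : ℝ := C * (5:ℝ)^β * b^((1:ℝ)/p) with hM0def
  have hM0pos : 0 < M0 := by positivity
  have key : ∀ δ : ℝ, 0 < δ → δ ≤ 1/60 → K0 * δ^((n:ℝ)+ρ) ≤ M0 * δ^β := by
    intro δ hδ0 hδ60
    have hδhalf : δ ≤ 1/2 := by linarith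
    set f : Stmt14Aux.E (n+1) → ℝ :=
      (Metric.ball (0 : Stmt14Aux.E (n+1)) (5*δ)).indicator (fun _ => (1:ℝ)) with hfdef
    have hfmeas : Measurable f := measurable_const.indicator measurableSet_ball
    have hineq := h f hfmeas
    set a : ℝ := (μH[(n:ℝ)] (Stmt14Aux.cap (n+1) (Stmt14Aux.e1 n) δ)).toReal with hadef
    have ha0 : 0 ≤ a := ENNReal.toReal_nonneg
    have ha_lb : (δ/sn)^n ≤ a := by
      have h1 := Stmt14Aux.cap_lower n hn hδ0 hδhalf
      have h2 := ENNReal.toReal_mono (Stmt14Aux.cap_lt_top n hδhalf).ne h1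
      rwa [ENNReal.toReal_ofReal (by positivity)] at h2
    -- pointwise lower bound on the annulus
    have hmain : ∀ x ∈ Ann, ENNReal.ofReal a * (ENNReal.ofReal δ)^ρ ≤ frakAe (n+1) r f x := by
      intro x hx
      have hx2 : ‖x‖ ≤ 3/2 := by
        have := hx.1
        rwa [Metric.mem_closedBall, dist_zero_right] at this
      have hx1 : 1 ≤ ‖x‖ := by
        by_contra hcon
        push_neg at hcon
        exact hx.2 (by rwa [Metric.mem_ball, dist_zero_right])
      set c : ℝ := ‖x‖ with hcdef
      have hc0 : (0:ℝ) < c := by linarith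
      set u : Stmt14Aux.E (n+1) := c⁻¹ • x with hudef
      have hcu : x = c • u := by
        rw [hudef, smul_smul, mul_inv_cancel₀ hc0.ne', one_smul]
      have hu1 : ‖u‖ = 1 := by
        rw [hudef, norm_smul, Real.norm_eq_abs, abs_inv, abs_of_pos hc0, ← hcdef]
        field_simp
      set T : Set ℝ := Set.Icc c (c+δ) with hTdef
      have hTmeas : MeasurableSet T := measurableSet_Icc
      -- Step A1 : on T the spherical average is at least a
      have hA1 : ∀ t ∈ T, a ≤ Asph (n+1) t f x := by
        intro t ht
        obtain ⟨ht1, ht2⟩ := ht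
        have ht0 : (1:ℝ) ≤ t := le_trans hx1 ht1
        have htle : t ≤ 2 := by linarith
        set S : Set (Stmt14Aux.E (n+1)) :=
          (fun y => x - t • y) ⁻¹' (Metric.ball (0 : Stmt14Aux.E (n+1)) (5*δ)) with hSdef
        have hSopen : IsOpen S :=
          Metric.isOpen_ball.preimage (continuous_const.sub (continuous_id.const_smul t))
        have hfy : (fun y => f (x - t • y)) = S.indicator (fun _ => (1:ℝ)) := by
          funext y
          simp only [hfdef, hSdef, Set.indicator_apply, Set.mem_preimage]
        have hAeq : Asph (n+1) t f x = (sphMeas (n+1) S).toReal := by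
          unfold Asph
          rw [hfy, integral_indicator_const (1:ℝ) hSopen.measurableSet, smul_eq_mul, mul_one]
          rfl
        have hrs : sphMeas (n+1) S = μH[(n:ℝ)] (S ∩ Metric.sphere 0 1) := by
          unfold sphMeas
          rw [Measure.restrict_apply hSopen.measurableSet, hexp]
        have hlow : Stmt14Aux.cap (n+1) u δ ⊆ S ∩ Metric.sphere 0 1 := by
          rintro y ⟨hy1, hy2⟩
          simp only [Set.mem_setOf_eq] at hy2
          refine ⟨?_, hy1⟩
          simp only [hSdef, Set.mem_preimage, Metric.mem_ball, dist_zero_right]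
          have hdec : x - t • y = (c - t) • u + t • (u - y) := by
            conv_lhs => rw [hcu]
            module
          have e2 : ‖u - y‖ ≤ δ := by rw [norm_sub_rev]; exact hy2
          have e1 : |c - t| ≤ δ := abs_le.2 ⟨by linarith, by linarith⟩
          have hn1 : ‖(c - t) • u‖ ≤ δ := by
            rw [norm_smul, Real.norm_eq_abs, hu1, mul_one]
            exact e1
          have hn2 : ‖t • (u - y)‖ ≤ 2 * δ := by
            rw [norm_smul, Real.norm_eq_abs, abs_of_pos (by linarith : (0:ℝ) < t)]
            nlinarith [norm_nonneg (u - y)]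
          calc ‖x - t • y‖ = ‖(c - t) • u + t • (u - y)‖ := by rw [hdec]
            _ ≤ ‖(c - t) • u‖ + ‖t • (u - y)‖ := norm_add_le _ _
            _ < 5 * δ := by linarith
        have hup : S ∩ Metric.sphere 0 1 ⊆ Stmt14Aux.cap (n+1) u (1/2) := by
          rintro y ⟨hyS, hy1⟩
          refine ⟨hy1, ?_⟩
          simp only [Set.mem_setOf_eq]
          simp only [hSdef, Set.mem_preimage, Metric.mem_ball, dist_zero_right] at hyS
          have hdec2 : t • (u - y) = (t - c) • u + (x - t • y) := by
            conv_rhs => rw [hcu]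
            module
          have hnorm2 : t * ‖u - y‖ ≤ 6*δ := by
            calc t * ‖u - y‖ = ‖t • (u - y)‖ := by
                  rw [norm_smul, Real.norm_eq_abs, abs_of_pos (by linarith : (0:ℝ) < t)]
              _ = ‖(t - c) • u + (x - t • y)‖ := by rw [hdec2]
              _ ≤ ‖(t - c) • u‖ + ‖x - t • y‖ := norm_add_le _ _
              _ ≤ δ + 5*δ := by
                  rw [norm_smul, Real.norm_eq_abs, hu1, mul_one]
                  have : |t - c| ≤ δ := abs_le.2 ⟨by linarith, by linarith⟩
                  linarith
              _ = 6*δ := by ring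
          rw [norm_sub_rev]
          nlinarith [norm_nonneg (u - y)]
        have hfin : μH[(n:ℝ)] (S ∩ Metric.sphere 0 1) < ∞ :=
          lt_of_le_of_lt (measure_mono hup) (by
            rw [Stmt14Aux.rot_cap n hu1]
            exact Stmt14Aux.cap_lt_top n (by norm_num))
        have hcap_le : μH[(n:ℝ)] (Stmt14Aux.cap (n+1) (Stmt14Aux.e1 n) δ)
            ≤ μH[(n:ℝ)] (S ∩ Metric.sphere 0 1) := by
          rw [← Stmt14Aux.rot_cap n hu1]
          exact measure_mono hlow
        rw [hAeq, hrs, hadef]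
        exact ENNReal.toReal_mono hfin.ne hcap_le
      -- Step A2 : muT T is at least δ
      have hTsub : T ⊆ Set.Icc (1:ℝ) 2 := by
        intro t ht
        exact ⟨le_trans hx1 ht.1, by linarith [ht.2]⟩
      have hA2 : ENNReal.ofReal δ ≤ muT (n+1) T := by
        unfold muT
        rw [withDensity_apply _ hTmeas, Measure.restrict_restrict hTmeas,
          Set.inter_eq_self_of_subset_left hTsub]
        calc ENNReal.ofReal δ = volume T := by
              rw [hTdef, Real.volume_Icc]
              congr 1
              ring
          _ = ∫⁻ _ in T, 1 ∂volume := (setLIntegral_one T).symm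
          _ ≤ ∫⁻ t in T, ENNReal.ofReal (t ^ (((n+1:ℕ):ℝ) - 1)) ∂volume := by
              refine lintegral_mono_ae ((ae_restrict_iff' hTmeas).2
                (Filter.Eventually.of_forall ?_))
              intro t ht
              have ht1 : (1:ℝ) ≤ t := le_trans hx1 ht.1
              rw [hexp, Real.rpow_natCast]
              calc (1:ℝ≥0∞) = ENNReal.ofReal 1 := ENNReal.ofReal_one.symm
                _ ≤ ENNReal.ofReal (t ^ n) :=
                    ENNReal.ofReal_le_ofReal (one_le_pow₀ ht1)
      -- Step A3 : eLpNorm lower bound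
      have hTpos : (muT (n+1)) T ≠ 0 := by
        intro h0'
        rw [h0', le_zero_iff, ENNReal.ofReal_eq_zero] at hA2
        linarith
      have hμ'ne : (muT (n+1)).restrict T ≠ 0 := by
        intro h'
        exact hTpos (by rw [← Measure.restrict_apply_univ, h']; simp)
      have hconst := eLpNorm_const (μ := (muT (n+1)).restrict T) a hr0 hμ'ne
      have hnna : ‖a‖ₑ = ENNReal.ofReal a := Real.enorm_eq_ofReal ha0
      have hmono1 : eLpNorm (fun _ => a) r ((muT (n+1)).restrict T)
          ≤ eLpNorm (fun t => Asph (n+1) t f x) r ((muT (n+1)).restrict T) := by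
        apply eLpNorm_mono_ae
        refine (ae_restrict_iff' hTmeas).2 (Filter.Eventually.of_forall ?_)
        intro t ht
        rw [Real.norm_eq_abs, Real.norm_eq_abs, abs_of_nonneg ha0]
        exact le_trans (hA1 t ht) (le_abs_self _)
      have hmono2 : eLpNorm (fun t => Asph (n+1) t f x) r ((muT (n+1)).restrict T)
          ≤ frakAe (n+1) r f x := by
        unfold frakAe
        exact eLpNorm_mono_measure _ Measure.restrict_le_self
      have hexpr : ρ = 1/r.toReal := by rw [hρdef, ENNReal.toReal_inv, one_div]
      calc ENNReal.ofReal a * (ENNReal.ofReal δ)^ρ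
          ≤ ENNReal.ofReal a * (((muT (n+1)).restrict T) Set.univ) ^ (1/r.toReal) := by
            apply mul_le_mul_right
            rw [Measure.restrict_apply_univ, ← hexpr]
            exact ENNReal.rpow_le_rpow hA2 hρ0
        _ = eLpNorm (fun _ => a) r ((muT (n+1)).restrict T) := by rw [hconst, hnna]
        _ ≤ _ := le_trans hmono1 hmono2
    -- Step B : integrate over the annulus
    set A : ℝ≥0∞ := ENNReal.ofReal a * (ENNReal.ofReal δ)^ρ with hAdef
    have hB : A * V ^ ((1:ℝ)/q) ≤ (∫⁻ x, frakAe (n+1) r f x ^ q) ^ (1/q) := by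
      have h1 : A^q * V ≤ ∫⁻ x, frakAe (n+1) r f x ^ q := by
        calc A^q * V = ∫⁻ _ in Ann, A^q ∂volume := (setLIntegral_const Ann (A^q)).symm
          _ = ∫⁻ x, Ann.indicator (fun _ => A^q) x ∂volume :=
              (lintegral_indicator hAnnMeas _).symm
          _ ≤ ∫⁻ x, frakAe (n+1) r f x ^ q ∂volume := by
              apply lintegral_mono
              intro x
              by_cases hx : x ∈ Ann
              · rw [Set.indicator_of_mem hx]
                exact ENNReal.rpow_le_rpow (hmain x hx) (by linarith)
              · rw [Set.indicator_of_notMem hx]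
                exact zero_le
      calc A * V^((1:ℝ)/q) = (A^q * V)^((1:ℝ)/q) := by
            rw [ENNReal.mul_rpow_of_nonneg _ _ (by positivity : (0:ℝ) ≤ 1/q),
              ← ENNReal.rpow_mul, mul_one_div_cancel hq0.ne', ENNReal.rpow_one]
        _ ≤ _ := ENNReal.rpow_le_rpow h1 (by positivity)
    -- Step C : compute the right-hand side
    have hRHS : eLpNorm f (ENNReal.ofReal p) volume
        = (ENNReal.ofReal ((5*δ)^(n+1)) * B₀) ^ ((1:ℝ)/p) := by
      have hpne : ENNReal.ofReal p ≠ 0 := by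
        simp only [ne_eq, ENNReal.ofReal_eq_zero, not_le]
        linarith
      rw [hfdef, eLpNorm_indicator_const measurableSet_ball hpne ENNReal.ofReal_ne_top,
        ENNReal.toReal_ofReal hp0.le, enorm_one, one_mul]
      congr 1
      have hball := MeasureTheory.Measure.addHaar_ball
        (volume : Measure (Stmt14Aux.E (n+1))) 0 (by positivity : (0:ℝ) ≤ 5*δ)
      rw [hball, finrank_euclideanSpace_fin, hB₀def]
    have hch : A * V^((1:ℝ)/q)
        ≤ ENNReal.ofReal C * (ENNReal.ofReal ((5*δ)^(n+1)) * B₀) ^ ((1:ℝ)/p) := by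
      calc A * V^((1:ℝ)/q) ≤ (∫⁻ x, frakAe (n+1) r f x ^ q) ^ (1/q) := hB
        _ ≤ ENNReal.ofReal C * eLpNorm f (ENNReal.ofReal p) volume := hineq
        _ = _ := by rw [hRHS]
    -- convert to a real inequality
    have hVof : V = ENNReal.ofReal v := (ENNReal.ofReal_toReal hVt).symm
    have hBof : B₀ = ENNReal.ofReal b := (ENNReal.ofReal_toReal hBt).symm
    rw [hAdef, hVof, hBof, ENNReal.ofReal_rpow_of_pos hδ0, ENNReal.ofReal_rpow_of_pos hv0,
      ← ENNReal.ofReal_mul ha0, ← ENNReal.ofReal_mul (by positivity),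
      ← ENNReal.ofReal_mul (by positivity : (0:ℝ) ≤ (5*δ)^(n+1)),
      ENNReal.ofReal_rpow_of_pos (by positivity),
      ← ENNReal.ofReal_mul hC.le] at hch
    have hreal : a * δ^ρ * v^((1:ℝ)/q) ≤ C * (((5*δ)^(n+1)) * b)^((1:ℝ)/p) :=
      (ENNReal.ofReal_le_ofReal_iff (by positivity)).1 hch
    -- massage into the power form
    have e1 : K0 * δ^((n:ℝ)+ρ) ≤ a * δ^ρ * v^((1:ℝ)/q) := by
      have h1 : K0 * δ^((n:ℝ)+ρ) = ((δ/sn)^n) * δ^ρ * v^((1:ℝ)/q) := by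
        rw [Real.rpow_add hδ0, Real.rpow_natCast, div_pow, hK0def, div_eq_mul_inv]
        ring
      rw [h1]
      apply mul_le_mul_of_nonneg_right
        (mul_le_mul_of_nonneg_right ha_lb (Real.rpow_nonneg hδ0.le _))
        (Real.rpow_nonneg hv0.le _)
    have e2 : C * (((5*δ)^(n+1)) * b)^((1:ℝ)/p) = M0 * δ^β := by
      rw [Real.mul_rpow (by positivity) hb0.le,
        ← Real.rpow_natCast (5*δ) (n+1), ← Real.rpow_mul (by positivity : (0:ℝ) ≤ 5*δ)]
      have hexp2 : ((n+1:ℕ):ℝ)*((1:ℝ)/p) = β := by rw [hβdef]; push_cast; ring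
      rw [hexp2, Real.mul_rpow (by norm_num : (0:ℝ) ≤ 5) hδ0.le, hM0def]
      ring
    calc K0 * δ^((n:ℝ)+ρ) ≤ a * δ^ρ * v^((1:ℝ)/q) := e1
      _ ≤ C * (((5*δ)^(n+1)) * b)^((1:ℝ)/p) := hreal
      _ = M0 * δ^β := e2
  have hfinal := Stmt14Aux.exp_compare hK0pos hM0pos key
  rw [hβdef] at hfinal
  push_cast
  linarith
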